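/- For the eight vectors in ℝ^5: l₁ = (−1,0,0,1,0), l₂ = (0,−1,0,1,0), l₃ = (0,0,−1,1,0), l₄ = (1,0,0,0,1), l₅ = (0,1,0,0,1), l₆ = (0,0,1,0,1), l₇ = (0,0,0,−1,0), l₈ = (1,1,1,−1,2), each lᵢ spans an extremal ray of the convex cone generated by {l₁,…,l₈}; equivalently, no lᵢ is a nonnegative linear combination of the remaining seven vectors. -/

import Mathlib

open Finset

/-- The convex cone generated by a set: all finite nonnegative linear combinations. -/
def coneGen {V : Type*} [AddCommGroup V] [Module ℝ V] (S : Set V) : Set V :=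
  {x | ∃ (n : ℕ) (c : Fin n → ℝ) (v : Fin n → V),
    (∀ i, 0 ≤ c i) ∧ (∀ i, v i ∈ S) ∧ x = ∑ i, c i • v i}

/-- A cone is salient if it contains no line. -/
def IsSalient {V : Type*} [AddCommGroup V] [Module ℝ V] (C : Set V) : Prop :=
  ∀ x ∈ C, -x ∈ C → x = 0

/-- A nonzero vector spans an extremal ray of the cone `C`. -/
def IsExtremalVec {V : Type*} [AddCommGroup V] [Module ℝ V] (C : Set V) (v : V) : Prop :=
  v ≠ 0 ∧ v ∈ C ∧ ∀ x y, x ∈ C → y ∈ C → v = x + y →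
    (∃ a : ℝ, 0 ≤ a ∧ x = a • v) ∧ (∃ b : ℝ, 0 ≤ b ∧ y = b • v)

def L8 : Fin 8 → (Fin 5 → ℝ) :=
  ![![-1, 0, 0, 1, 0],
    ![0, -1, 0, 1, 0],
    ![0, 0, -1, 1, 0],
    ![1, 0, 0, 0, 1],
    ![0, 1, 0, 0, 1],
    ![0, 0, 1, 0, 1],
    ![0, 0, 0, -1, 0],
    ![1, 1, 1, -1, 2]]

lemma L8m_0 (h : 0 < 8) : L8 ⟨0, h⟩ = ![-1, 0, 0, 1, 0] := rfl
lemma L8o_0 : L8 0 = ![-1, 0, 0, 1, 0] := rfl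
lemma L8m_1 (h : 1 < 8) : L8 ⟨1, h⟩ = ![0, -1, 0, 1, 0] := rfl
lemma L8o_1 : L8 1 = ![0, -1, 0, 1, 0] := rfl
lemma L8m_2 (h : 2 < 8) : L8 ⟨2, h⟩ = ![0, 0, -1, 1, 0] := rfl
lemma L8o_2 : L8 2 = ![0, 0, -1, 1, 0] := rfl
lemma L8m_3 (h : 3 < 8) : L8 ⟨3, h⟩ = ![1, 0, 0, 0, 1] := rfl
lemma L8o_3 : L8 3 = ![1, 0, 0, 0, 1] := rfl
lemma L8m_4 (h : 4 < 8) : L8 ⟨4, h⟩ = ![0, 1, 0, 0, 1] := rfl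
lemma L8o_4 : L8 4 = ![0, 1, 0, 0, 1] := rfl
lemma L8m_5 (h : 5 < 8) : L8 ⟨5, h⟩ = ![0, 0, 1, 0, 1] := rfl
lemma L8o_5 : L8 5 = ![0, 0, 1, 0, 1] := rfl
lemma L8m_6 (h : 6 < 8) : L8 ⟨6, h⟩ = ![0, 0, 0, -1, 0] := rfl
lemma L8o_6 : L8 6 = ![0, 0, 0, -1, 0] := rfl
lemma L8m_7 (h : 7 < 8) : L8 ⟨7, h⟩ = ![1, 1, 1, -1, 2] := rfl
lemma L8o_7 : L8 7 = ![1, 1, 1, -1, 2] := rfl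

/-- The dot-product functional. -/
def dotf (u x : Fin 5 → ℝ) : ℝ := ∑ k, x k * u k

lemma dotf_sum {n : ℕ} (u : Fin 5 → ℝ) (c : Fin n → ℝ) (v : Fin n → (Fin 5 → ℝ)) :
    dotf u (∑ m, c m • v m) = ∑ m, c m * dotf u (v m) := by
  unfold dotf
  simp only [Finset.sum_apply, Pi.smul_apply, smul_eq_mul, Finset.sum_mul, Finset.mul_sum,
    mul_assoc]
  exact Finset.sum_comm

lemma dotf_add (u x y : Fin 5 → ℝ) : dotf u (x + y) = dotf u x + dotf u y := by
  unfold dotf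
  rw [← Finset.sum_add_distrib]
  exact Finset.sum_congr rfl fun k _ => by simp [add_mul]

lemma cone_f_zero (u : Fin 5 → ℝ) (i : Fin 8)
    (h0 : ∀ j : Fin 8, 0 ≤ dotf u (L8 j))
    (hu : ∀ j : Fin 8, dotf u (L8 j) = 0 → j = i)
    (x : Fin 5 → ℝ) (hx : x ∈ coneGen (Set.range L8)) (hfx : dotf u x = 0) :
    ∃ a : ℝ, 0 ≤ a ∧ x = a • L8 i := by
  obtain ⟨n, c, v, hc, hv, rfl⟩ := hx
  rw [dotf_sum] at hfx
  have hterm0 : ∀ m ∈ Finset.univ, c m * dotf u (v m) = 0 := by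
    rw [← Finset.sum_eq_zero_iff_of_nonneg]
    · exact hfx
    · intro m _
      obtain ⟨j, hj⟩ := hv m
      exact mul_nonneg (hc m) (hj ▸ h0 j)
  have hterm : ∀ m, c m • v m = c m • L8 i := by
    intro m
    obtain ⟨j, hj⟩ := hv m
    by_cases h : dotf u (v m) = 0
    · rw [← hj] at h ⊢
      rw [hu j h]
    · have hcm : c m = 0 := by
        rcases mul_eq_zero.mp (hterm0 m (Finset.mem_univ m)) with h' | h'
        · exact h'
        · exact absurd h' h
      simp [hcm]
  refine ⟨∑ m, c m, Finset.sum_nonneg fun m _ => hc m, ?_⟩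
  calc ∑ m, c m • v m = ∑ m, c m • L8 i := Finset.sum_congr rfl fun m _ => hterm m
    _ = (∑ m, c m) • L8 i := by rw [Finset.sum_smul]

lemma key (u : Fin 5 → ℝ) (i : Fin 8)
    (h0 : ∀ j : Fin 8, 0 ≤ dotf u (L8 j))
    (hz : dotf u (L8 i) = 0)
    (hu : ∀ j : Fin 8, dotf u (L8 j) = 0 → j = i)
    (hne : L8 i ≠ 0) :
    IsExtremalVec (coneGen (Set.range L8)) (L8 i) ∧
      ¬ ∃ c : Fin 8 → ℝ, (∀ j, 0 ≤ c j) ∧ c i = 0 ∧ L8 i = ∑ j, c j • L8 j := by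
  have hmem : L8 i ∈ coneGen (Set.range L8) := by
    refine ⟨1, fun _ => 1, fun _ => L8 i, fun _ => zero_le_one, fun _ => ⟨i, rfl⟩, ?_⟩
    simp
  have hconef : ∀ x ∈ coneGen (Set.range L8), 0 ≤ dotf u x := by
    rintro x ⟨n, c, v, hc, hv, rfl⟩
    rw [dotf_sum]
    refine Finset.sum_nonneg fun m _ => ?_
    obtain ⟨j, hj⟩ := hv m
    exact mul_nonneg (hc m) (hj ▸ h0 j)
  constructor
  · refine ⟨hne, hmem, ?_⟩
    intro x y hxc hyc hxy
    have hsum : dotf u x + dotf u y = 0 := by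
      rw [← dotf_add, ← hxy, hz]
    have hx0 : dotf u x = 0 :=
      le_antisymm (by linarith [hconef y hyc]) (hconef x hxc)
    have hy0 : dotf u y = 0 := by linarith
    exact ⟨cone_f_zero u i h0 hu x hxc hx0, cone_f_zero u i h0 hu y hyc hy0⟩
  · rintro ⟨c, hc, hci, heq⟩
    have hf : ∑ j, c j * dotf u (L8 j) = 0 := by
      rw [← dotf_sum, ← heq, hz]
    have hterm0 : ∀ j ∈ Finset.univ, c j * dotf u (L8 j) = 0 := by
      rw [← Finset.sum_eq_zero_iff_of_nonneg]
      · exact hf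
      · exact fun j _ => mul_nonneg (hc j) (h0 j)
    have hLz : L8 i = 0 := by
      rw [heq]
      refine Finset.sum_eq_zero fun j _ => ?_
      by_cases h : dotf u (L8 j) = 0
      · rw [hu j h, hci, zero_smul]
      · have hcj : c j = 0 := by
          rcases mul_eq_zero.mp (hterm0 j (Finset.mem_univ j)) with h' | h'
          · exact h'
          · exact absurd h' h
        rw [hcj, zero_smul]
    exact hne hLz

attribute [local simp] L8m_0 L8m_1 L8m_2 L8m_3 L8m_4 L8m_5 L8m_6 L8m_7
  L8o_0 L8o_1 L8o_2 L8o_3 L8o_4 L8o_5 L8o_6 L8o_7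

theorem each_li_is_extremal :
    ∀ i : Fin 8, IsExtremalVec (coneGen (Set.range L8)) (L8 i) ∧
      ¬ ∃ c : Fin 8 → ℝ, (∀ j, 0 ≤ c j) ∧ c i = 0 ∧ L8 i = ∑ j, c j • L8 j := by
  intro i
  fin_cases i
  · refine key ![(-1 : ℝ), (-2 : ℝ), (-2 : ℝ), (-1 : ℝ), (3 : ℝ)] ⟨0, by omega⟩ ?_ ?_ ?_ ?_
    · intro j; fin_cases j <;> norm_num [dotf, Fin.sum_univ_five, Matrix.cons_val_two, Matrix.cons_val_three, Matrix.cons_val_four]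
    · norm_num [dotf, Fin.sum_univ_five, Matrix.cons_val_two, Matrix.cons_val_three, Matrix.cons_val_four]
    · intro j hj
      fin_cases j <;>
        first
        | rfl
        | (norm_num [dotf, Fin.sum_univ_five, Matrix.cons_val_two, Matrix.cons_val_three, Matrix.cons_val_four] at hj)
    · intro h
      have := congrFun h 3
      rw [L8m_0] at this
      norm_num [Matrix.cons_val_three, Matrix.cons_val_four] at this
  · refine key ![(-2 : ℝ), (-1 : ℝ), (-2 : ℝ), (-1 : ℝ), (3 : ℝ)] ⟨1, by omega⟩ ?_ ?_ ?_ ?_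
    · intro j; fin_cases j <;> norm_num [dotf, Fin.sum_univ_five, Matrix.cons_val_two, Matrix.cons_val_three, Matrix.cons_val_four]
    · norm_num [dotf, Fin.sum_univ_five, Matrix.cons_val_two, Matrix.cons_val_three, Matrix.cons_val_four]
    · intro j hj
      fin_cases j <;>
        first
        | rfl
        | (norm_num [dotf, Fin.sum_univ_five, Matrix.cons_val_two, Matrix.cons_val_three, Matrix.cons_val_four] at hj)
    · intro h
      have := congrFun h 3
      rw [L8m_1] at this
      norm_num [Matrix.cons_val_three, Matrix.cons_val_four] at this
  · refine key ![(-2 : ℝ), (-2 : ℝ), (-1 : ℝ), (-1 : ℝ), (3 : ℝ)] ⟨2, by omega⟩ ?_ ?_ ?_ ?_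
    · intro j; fin_cases j <;> norm_num [dotf, Fin.sum_univ_five, Matrix.cons_val_two, Matrix.cons_val_three, Matrix.cons_val_four]
    · norm_num [dotf, Fin.sum_univ_five, Matrix.cons_val_two, Matrix.cons_val_three, Matrix.cons_val_four]
    · intro j hj
      fin_cases j <;>
        first
        | rfl
        | (norm_num [dotf, Fin.sum_univ_five, Matrix.cons_val_two, Matrix.cons_val_three, Matrix.cons_val_four] at hj)
    · intro h
      have := congrFun h 3
      rw [L8m_2] at this
      norm_num [Matrix.cons_val_three, Matrix.cons_val_four] at this
  · refine key ![(-10 : ℝ), (-7 : ℝ), (-7 : ℝ), (-5 : ℝ), (10 : ℝ)] ⟨3, by omega⟩ ?_ ?_ ?_ ?_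
    · intro j; fin_cases j <;> norm_num [dotf, Fin.sum_univ_five, Matrix.cons_val_two, Matrix.cons_val_three, Matrix.cons_val_four]
    · norm_num [dotf, Fin.sum_univ_five, Matrix.cons_val_two, Matrix.cons_val_three, Matrix.cons_val_four]
    · intro j hj
      fin_cases j <;>
        first
        | rfl
        | (norm_num [dotf, Fin.sum_univ_five, Matrix.cons_val_two, Matrix.cons_val_three, Matrix.cons_val_four] at hj)
    · intro h
      have := congrFun h 4
      rw [L8m_3] at this
      norm_num [Matrix.cons_val_three, Matrix.cons_val_four] at this
  · refine key ![(-7 : ℝ), (-10 : ℝ), (-7 : ℝ), (-5 : ℝ), (10 : ℝ)] ⟨4, by omega⟩ ?_ ?_ ?_ ?_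
    · intro j; fin_cases j <;> norm_num [dotf, Fin.sum_univ_five, Matrix.cons_val_two, Matrix.cons_val_three, Matrix.cons_val_four]
    · norm_num [dotf, Fin.sum_univ_five, Matrix.cons_val_two, Matrix.cons_val_three, Matrix.cons_val_four]
    · intro j hj
      fin_cases j <;>
        first
        | rfl
        | (norm_num [dotf, Fin.sum_univ_five, Matrix.cons_val_two, Matrix.cons_val_three, Matrix.cons_val_four] at hj)
    · intro h
      have := congrFun h 4
      rw [L8m_4] at this
      norm_num [Matrix.cons_val_three, Matrix.cons_val_four] at this
  · refine key ![(-7 : ℝ), (-7 : ℝ), (-10 : ℝ), (-5 : ℝ), (10 : ℝ)] ⟨5, by omega⟩ ?_ ?_ ?_ ?_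
    · intro j; fin_cases j <;> norm_num [dotf, Fin.sum_univ_five, Matrix.cons_val_two, Matrix.cons_val_three, Matrix.cons_val_four]
    · norm_num [dotf, Fin.sum_univ_five, Matrix.cons_val_two, Matrix.cons_val_three, Matrix.cons_val_four]
    · intro j hj
      fin_cases j <;>
        first
        | rfl
        | (norm_num [dotf, Fin.sum_univ_five, Matrix.cons_val_two, Matrix.cons_val_three, Matrix.cons_val_four] at hj)
    · intro h
      have := congrFun h 4
      rw [L8m_5] at this
      norm_num [Matrix.cons_val_three, Matrix.cons_val_four] at this
  · refine key ![(-1 : ℝ), (-1 : ℝ), (-1 : ℝ), (0 : ℝ), (2 : ℝ)] ⟨6, by omega⟩ ?_ ?_ ?_ ?_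
    · intro j; fin_cases j <;> norm_num [dotf, Fin.sum_univ_five, Matrix.cons_val_two, Matrix.cons_val_three, Matrix.cons_val_four]
    · norm_num [dotf, Fin.sum_univ_five, Matrix.cons_val_two, Matrix.cons_val_three, Matrix.cons_val_four]
    · intro j hj
      fin_cases j <;>
        first
        | rfl
        | (norm_num [dotf, Fin.sum_univ_five, Matrix.cons_val_two, Matrix.cons_val_three, Matrix.cons_val_four] at hj)
    · intro h
      have := congrFun h 3
      rw [L8m_6] at this
      norm_num [Matrix.cons_val_three, Matrix.cons_val_four] at this
  · refine key ![(-4 : ℝ), (-4 : ℝ), (-4 : ℝ), (-2 : ℝ), (5 : ℝ)] ⟨7, by omega⟩ ?_ ?_ ?_ ?_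
    · intro j; fin_cases j <;> norm_num [dotf, Fin.sum_univ_five, Matrix.cons_val_two, Matrix.cons_val_three, Matrix.cons_val_four]
    · norm_num [dotf, Fin.sum_univ_five, Matrix.cons_val_two, Matrix.cons_val_three, Matrix.cons_val_four]
    · intro j hj
      fin_cases j <;>
        first
        | rfl
        | (norm_num [dotf, Fin.sum_univ_five, Matrix.cons_val_two, Matrix.cons_val_three, Matrix.cons_val_four] at hj)
    · intro h
      have := congrFun h 4
      rw [L8m_7] at this
      norm_num [Matrix.cons_val_three, Matrix.cons_val_four] at this
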